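/- Let H be a graph with q edges and let s = k·q. Let 𝒻 be a k-uniform hypergraph and let G₂ be the graph on the vertex set of 𝒻 where xy is an edge iff the kernel degree deg*_𝒻({x,y}) ≥ s (i.e., 𝒻 contains a Δ-system of size s with kernel {x,y}). If H is a subgraph of G₂, then 𝒻 contains a copy of the k-expansion H^{(k)}. -/

import Mathlib

/-- The `k`-expansion `T^(k)` of a graph `T`: each edge `e = xy` of `T` is replaced by the
`k`-set consisting of `x`, `y` and `k - 2` new vertices private to `e` (so new vertices of
distinct edges are distinct, and disjoint from `V(T)`). -/
def expansion (k : ℕ) {V : Type*} [Fintype V] [DecidableEq V] (T : SimpleGraph V)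
    [DecidableRel T.Adj] : Finset (Finset (V ⊕ Sym2 V × Fin (k - 2))) :=
  T.edgeFinset.image (fun e =>
    ((Finset.univ.filter (fun v => v ∈ e)).image Sum.inl) ∪
      (Finset.univ.image (fun i : Fin (k - 2) => Sum.inr (e, i))))

/-- `σ(T) = min { |X| + e(T ∖ X) : X independent in T }`. -/
noncomputable def graphSigma {V : Type*} (T : SimpleGraph V) : ℕ :=
  sInf {m | ∃ X : Set V, (∀ x ∈ X, ∀ y ∈ X, ¬ T.Adj x y) ∧ X.Finite ∧
    m = X.ncard + {e ∈ T.edgeSet | ∀ x ∈ X, x ∉ e}.ncard}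

/-- `τ(T)`: the minimum size of a set of vertices meeting every edge of `T`. -/
noncomputable def graphTau {V : Type*} (T : SimpleGraph V) : ℕ :=
  sInf {m | ∃ S : Set V, (∀ e ∈ T.edgeSet, ∃ x ∈ S, x ∈ e) ∧ S.Finite ∧ m = S.ncard}

/-- `H` contains a copy of the hypergraph `Ts` (a subhypergraph isomorphic to `Ts`). -/
def ContainsCopy {α β : Type*} [DecidableEq α] [DecidableEq β]
    (H : Finset (Finset β)) (Ts : Finset (Finset α)) : Prop :=
  ∃ f : α → β, Set.InjOn f ↑(Ts.sup id) ∧ ∀ E ∈ Ts, E.image f ∈ H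

/-- `F` contains a Δ-system of size `s` with kernel `C`. -/
def HasDelta (F : Finset (Finset ℕ)) (C : Finset ℕ) (s : ℕ) : Prop :=
  ∃ D ⊆ F, D.card = s ∧ (∀ E ∈ D, C ⊆ E) ∧ ∀ E ∈ D, ∀ E' ∈ D, E ≠ E' → E ∩ E' = C

/-- Kernel-graph lemma: if `H` has `q` edges and `H` is a subgraph of the kernel graph of a
`k`-uniform family `F` with threshold `s = k·q` (i.e. each edge of `H` maps to a pair with a
Δ-system of size `k·q` in `F`), then `F` contains a copy of `H^(k)`. -/
lemma delta_avoid (F : Finset (Finset ℕ)) (C : Finset ℕ) (s : ℕ)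
    (hΔ : HasDelta F C s) (B : Finset ℕ) (hB : B.card < s) :
    ∃ E ∈ F, C ⊆ E ∧ Disjoint (E \ C) B := by
  obtain ⟨D, hDF, hDcard, hker, hint⟩ := hΔ
  by_contra hcon
  push_neg at hcon
  have hne : ∀ E ∈ D, ((E \ C) ∩ B).Nonempty := by
    intro E hE
    rw [← Finset.not_disjoint_iff_nonempty_inter]
    exact fun hd => hcon E (hDF hE) (hker E hE) hd
  set f : Finset ℕ → ℕ := fun E => if h : ((E \ C) ∩ B).Nonempty then h.choose else 0 with hf
  have hfmem : ∀ E ∈ D, f E ∈ (E \ C) ∩ B := by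
    intro E hE
    have h := hne E hE
    simp only [hf, dif_pos h]
    exact h.choose_spec
  have hle : D.card ≤ B.card := by
    apply Finset.card_le_card_of_injOn f
    · intro E hE
      exact (Finset.mem_inter.1 (hfmem E hE)).2
    · intro E hE E' hE' hfe
      by_contra hne'
      have h1 := (Finset.mem_inter.1 (hfmem E hE)).1
      have h2 := (Finset.mem_inter.1 (hfmem E' hE')).1
      rw [hfe] at h1
      have : f E' ∈ E ∩ E' := by
        rw [Finset.mem_inter]
        exact ⟨(Finset.mem_sdiff.1 h1).1, (Finset.mem_sdiff.1 h2).1⟩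
      rw [hint E hE E' hE' hne'] at this
      exact (Finset.mem_sdiff.1 h2).2 this
  omega

theorem stmt_13 {W : Type*} [Fintype W] [DecidableEq W] (H : SimpleGraph W)
    [DecidableRel H.Adj] (q k : ℕ) (hk : 2 ≤ k) (hq : H.edgeFinset.card = q)
    (F : Finset (Finset ℕ)) (hF : ∀ E ∈ F, E.card = k)
    (g : W → ℕ) (hg : Function.Injective g)
    (hadj : ∀ x y : W, H.Adj x y → HasDelta F {g x, g y} (k * q)) :
    ContainsCopy F (expansion k H) := by
  classical
  set S : Finset W := H.edgeFinset.sup (fun e => Finset.univ.filter (fun v => v ∈ e)) with hS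
  set Cc : Sym2 W → Finset ℕ :=
    fun e => (Finset.univ.filter (fun v => v ∈ e)).image g with hCcdef
  set gS : Finset ℕ := S.image g with hgSdef
  have hfilt : ∀ e ∈ H.edgeFinset, (Finset.univ.filter (fun v => v ∈ e)).card = 2 := by
    intro e he
    induction e with
    | _ x y =>
      have hadj' : H.Adj x y := by
        rwa [SimpleGraph.mem_edgeFinset, SimpleGraph.mem_edgeSet] at he
      have hxy : (Finset.univ.filter (fun v => v ∈ s(x, y))) = {x, y} := by
        ext v; simp [Sym2.mem_iff]
      rw [hxy, Finset.card_insert_of_notMem (by simp [hadj'.ne]), Finset.card_singleton]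
  have hCcard : ∀ e ∈ H.edgeFinset, (Cc e).card = 2 := by
    intro e he
    rw [hCcdef]
    rw [Finset.card_image_of_injective _ hg]
    exact hfilt e he
  have hCsub : ∀ e ∈ H.edgeFinset, Cc e ⊆ gS := by
    intro e he
    exact Finset.image_subset_image (Finset.le_sup (f := fun e =>
      Finset.univ.filter (fun v => v ∈ e)) he)
  have hgScard : gS.card ≤ 2 * q := by
    calc gS.card ≤ S.card := Finset.card_image_le
      _ ≤ ∑ e ∈ H.edgeFinset, (Finset.univ.filter (fun v => v ∈ e)).card := by
          rw [hS, Finset.sup_eq_biUnion]; exact Finset.card_biUnion_le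
      _ ≤ ∑ _e ∈ H.edgeFinset, 2 := Finset.sum_le_sum (fun e he => (hfilt e he).le)
      _ = 2 * q := by rw [Finset.sum_const, smul_eq_mul, hq, mul_comm]
  have hHD : ∀ e ∈ H.edgeFinset, HasDelta F (Cc e) (k * q) := by
    intro e he
    induction e with
    | _ x y =>
      have hadj' : H.Adj x y := by
        rwa [SimpleGraph.mem_edgeFinset, SimpleGraph.mem_edgeSet] at he
      have hxy : Cc s(x, y) = {g x, g y} := by
        have hfl : (Finset.univ.filter (fun v => v ∈ s(x, y))) = {x, y} := by
          ext v; simp [Sym2.mem_iff]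
        show (Finset.univ.filter (fun v => v ∈ s(x, y))).image g = {g x, g y}
        rw [hfl]; simp
      rw [hxy]
      exact hadj x y hadj'
  -- greedy construction
  have claim : ∀ L : List (Sym2 W), L.Nodup → (∀ e ∈ L, e ∈ H.edgeFinset) →
      ∃ φ : Sym2 W → Finset ℕ, ∀ e ∈ L, φ e ∈ F ∧ Cc e ⊆ φ e ∧
        Disjoint (φ e \ Cc e) gS ∧
        ∀ e' ∈ L, e ≠ e' → Disjoint (φ e \ Cc e) (φ e' \ Cc e') := by
    intro L
    induction L with
    | nil => intro _ _; exact ⟨fun _ => ∅, by simp⟩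
    | cons e L ih =>
      intro hnd hmem
      obtain ⟨φ, hφ⟩ := ih (List.Nodup.of_cons hnd)
        (fun e' h => hmem e' (List.mem_cons_of_mem _ h))
      have he : e ∈ H.edgeFinset := hmem e (List.mem_cons_self)
      have heL : e ∉ L := (List.nodup_cons.1 hnd).1
      set prev : Finset ℕ := L.toFinset.biUnion (fun e' => φ e' \ Cc e') with hprevdef
      have hq1 : 1 ≤ q := by rw [← hq]; exact Finset.card_pos.2 ⟨e, he⟩
      have hLcard : L.toFinset.card ≤ q - 1 := by
        have hsub : L.toFinset ⊆ H.edgeFinset.erase e := by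
          intro a ha
          rw [List.mem_toFinset] at ha
          exact Finset.mem_erase.2 ⟨fun h => heL (h ▸ ha), hmem a (List.mem_cons_of_mem _ ha)⟩
        calc L.toFinset.card ≤ (H.edgeFinset.erase e).card := Finset.card_le_card hsub
          _ = q - 1 := by rw [Finset.card_erase_of_mem he, hq]
      have hprevcard : prev.card ≤ (q - 1) * (k - 2) := by
        calc prev.card ≤ ∑ e' ∈ L.toFinset, (φ e' \ Cc e').card := Finset.card_biUnion_le
          _ ≤ ∑ _e' ∈ L.toFinset, (k - 2) := by
              apply Finset.sum_le_sum
              intro e' he'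
              have he'E : e' ∈ H.edgeFinset :=
                hmem e' (List.mem_cons_of_mem _ (List.mem_toFinset.1 he'))
              obtain ⟨h1, h2, _, _⟩ := hφ e' (List.mem_toFinset.1 he')
              rw [Finset.card_sdiff_of_subset h2, hF _ h1, hCcard e' he'E]
          _ = L.toFinset.card * (k - 2) := by rw [Finset.sum_const, smul_eq_mul]
          _ ≤ (q - 1) * (k - 2) := Nat.mul_le_mul_right _ hLcard
      have hsdcard : (gS \ Cc e).card ≤ 2 * q - 2 := by
        rw [Finset.card_sdiff_of_subset (hCsub e he), hCcard e he]
        omega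
      have hBcard : ((gS \ Cc e) ∪ prev).card < k * q := by
        have h1 := Finset.card_union_le (gS \ Cc e) prev
        obtain ⟨q', rfl⟩ : ∃ q', q = q' + 1 := ⟨q - 1, by omega⟩
        obtain ⟨k', rfl⟩ : ∃ k', k = k' + 2 := ⟨k - 2, by omega⟩
        have e1 : 2 * (q' + 1) - 2 = 2 * q' := by omega
        have e2 : q' + 1 - 1 = q' := by omega
        have e3 : k' + 2 - 2 = k' := by omega
        rw [e1] at hsdcard
        rw [e2, e3] at hprevcard
        nlinarith
      obtain ⟨P, hPF, hCP, hdisj⟩ := delta_avoid F (Cc e) (k * q) (hHD e he) _ hBcard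
      refine ⟨Function.update φ e P, ?_⟩
      have hPprev : ∀ e' ∈ L, Disjoint (P \ Cc e) (φ e' \ Cc e') := by
        intro e' he'
        refine Finset.disjoint_of_subset_right ?_ hdisj
        exact (Finset.subset_biUnion_of_mem (fun e' => φ e' \ Cc e')
          (List.mem_toFinset.2 he')).trans Finset.subset_union_right
      have hPgS : Disjoint (P \ Cc e) gS := by
        rw [Finset.disjoint_left]
        intro a haP hagS
        rcases Finset.mem_sdiff.1 haP with ⟨_, hac⟩
        exact Finset.disjoint_left.1 hdisj haP
          (Finset.mem_union_left _ (Finset.mem_sdiff.2 ⟨hagS, hac⟩))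
      intro e'' he''
      rcases List.mem_cons.1 he'' with heq | he''L
      · rw [heq, Function.update_self]
        refine ⟨hPF, hCP, hPgS, ?_⟩
        intro e' he' hne
        rcases List.mem_cons.1 he' with heq' | he'L
        · exact absurd heq'.symm hne
        · have hne2 : e' ≠ e := by rintro rfl; exact heL he'L
          rw [Function.update_of_ne hne2]
          exact hPprev e' he'L
      · have hne2 : e'' ≠ e := by rintro rfl; exact heL he''L
        rw [Function.update_of_ne hne2]
        obtain ⟨h1, h2, h3, h4⟩ := hφ e'' he''L
        refine ⟨h1, h2, h3, ?_⟩
        intro e' he' hne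
        rcases List.mem_cons.1 he' with heq' | he'L
        · rw [heq', Function.update_self]
          exact (hPprev e'' he''L).symm
        · have hne3 : e' ≠ e := by rintro rfl; exact heL he'L
          rw [Function.update_of_ne hne3]
          exact h4 e' he'L hne
  obtain ⟨φ, hφ⟩ := claim H.edgeFinset.toList (Finset.nodup_toList _)
    (fun e he' => Finset.mem_toList.1 he')
  have hφ' : ∀ e ∈ H.edgeFinset, φ e ∈ F ∧ Cc e ⊆ φ e ∧ Disjoint (φ e \ Cc e) gS ∧
      ∀ e' ∈ H.edgeFinset, e ≠ e' → Disjoint (φ e \ Cc e) (φ e' \ Cc e') := by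
    intro e he
    obtain ⟨h1, h2, h3, h4⟩ := hφ e (Finset.mem_toList.2 he)
    exact ⟨h1, h2, h3, fun e' he' => h4 e' (Finset.mem_toList.2 he')⟩
  have hpcard : ∀ e, e ∈ H.edgeFinset → (φ e \ Cc e).card = k - 2 := by
    intro e he
    rw [Finset.card_sdiff_of_subset (hφ' e he).2.1, hF _ (hφ' e he).1, hCcard e he]
  set f : W ⊕ Sym2 W × Fin (k - 2) → ℕ := Sum.elim g (fun p =>
    if h : p.1 ∈ H.edgeFinset then ((φ p.1 \ Cc p.1).orderIsoOfFin (hpcard p.1 h) p.2 : ℕ)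
    else 0) with hfdef
  have hf1 : ∀ v, f (Sum.inl v) = g v := fun v => rfl
  have hf2 : ∀ e (i : Fin (k - 2)) (h : e ∈ H.edgeFinset),
      f (Sum.inr (e, i)) = ((φ e \ Cc e).orderIsoOfFin (hpcard e h) i : ℕ) := by
    intro e i h
    simp only [hfdef, Sum.elim_inr, dif_pos h]
  have hmem2 : ∀ e (i : Fin (k - 2)) (h : e ∈ H.edgeFinset),
      f (Sum.inr (e, i)) ∈ φ e \ Cc e := by
    intro e i h
    rw [hf2 e i h]
    exact ((φ e \ Cc e).orderIsoOfFin (hpcard e h) i).2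
  have hmemsup : ∀ z ∈ (expansion k H).sup id,
      (∃ v, z = Sum.inl v ∧ v ∈ S) ∨
      ∃ p : Sym2 W × Fin (k - 2), z = Sum.inr p ∧ p.1 ∈ H.edgeFinset := by
    intro z hz
    rw [Finset.mem_sup] at hz
    obtain ⟨E, hE, hzE⟩ := hz
    obtain ⟨e, he, rfl⟩ := Finset.mem_image.1 hE
    simp only [id] at hzE
    rcases Finset.mem_union.1 hzE with h | h
    · obtain ⟨v, hv, rfl⟩ := Finset.mem_image.1 h
      exact Or.inl ⟨v, rfl, Finset.mem_sup.2 ⟨e, he, hv⟩⟩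
    · obtain ⟨i, _, rfl⟩ := Finset.mem_image.1 h
      exact Or.inr ⟨(e, i), rfl, he⟩
  refine ⟨f, ?_, ?_⟩
  · -- injectivity
    intro a ha b hb hab
    rcases hmemsup a ha with ⟨v, rfl, hvS⟩ | ⟨⟨e, i⟩, rfl, he⟩ <;>
      rcases hmemsup b hb with ⟨w, rfl, hwS⟩ | ⟨⟨e', j⟩, rfl, he'⟩
    · rw [hf1, hf1] at hab
      rw [hg hab]
    · exfalso
      have h1 : f (Sum.inr (e', j)) ∈ φ e' \ Cc e' := hmem2 e' j he'
      rw [← hab, hf1] at h1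
      exact Finset.disjoint_left.1 (hφ' e' he').2.2.1 h1 (Finset.mem_image_of_mem g hvS)
    · exfalso
      have h1 : f (Sum.inr (e, i)) ∈ φ e \ Cc e := hmem2 e i he
      rw [hab, hf1] at h1
      exact Finset.disjoint_left.1 (hφ' e he).2.2.1 h1 (Finset.mem_image_of_mem g hwS)
    · by_cases hee : e = e'
      · subst hee
        rw [hf2 e i he, hf2 e j he] at hab
        have : i = j := (Finset.orderIsoOfFin _ (hpcard e he)).injective
          (Subtype.coe_injective hab)
        rw [this]
      · exfalso
        have h1 := hmem2 e i he
        have h2 := hmem2 e' j he'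
        rw [hab] at h1
        exact Finset.disjoint_left.1 ((hφ' e he).2.2.2 e' he' hee) h1 h2
  · -- images in F
    intro E hE
    obtain ⟨e, he, rfl⟩ := Finset.mem_image.1 hE
    rw [Finset.image_union, Finset.image_image, Finset.image_image]
    have h1 : (Finset.univ.filter (fun v => v ∈ e)).image (f ∘ Sum.inl) = Cc e := by
      apply Finset.image_congr
      intro v _
      exact hf1 v
    have h2 : Finset.univ.image (f ∘ fun i : Fin (k - 2) => Sum.inr (e, i)) =
        φ e \ Cc e := by
      ext a
      simp only [Finset.mem_image, Finset.mem_univ, true_and, Function.comp]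
      constructor
      · rintro ⟨i, rfl⟩
        exact hmem2 e i he
      · intro ha
        refine ⟨((φ e \ Cc e).orderIsoOfFin (hpcard e he)).symm ⟨a, ha⟩, ?_⟩
        rw [hf2 _ _ he]
        simp
    rw [h1, h2, Finset.union_sdiff_of_subset (hφ' e he).2.1]
    exact (hφ' e he).1
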